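/- For all integers k ≥ 1 and n ≥ 0, H_k(ΔS_n)·H_k(Δ^m S_{n+1}) = H_k(Δ^{m+1} S_n)·H_k(S_{n+1}) − H_{k+1}(S_n)·H_{k−1}(Δ^{m+1} S_{n+1}). -/

import Mathlib

/-- Forward difference operator: `(fd u) n = u (n+1) - u n`.
Iterated differences are `fd^[i] u`. -/
def fd (u : ℕ → ℝ) : ℕ → ℝ := fun n => u (n + 1) - u n

/-- Hankel-type determinant `H_k(u_n)` (depending on the fixed integer `m`):
the determinant of the `k × k` matrix whose `(i,j)` entry is `Δ^{i·m} u_{n+j}`.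
By convention `H_k = 0` for `k < 0`, and `H_0 = 1` (empty determinant). -/
noncomputable def Hd (m : ℕ) (u : ℕ → ℝ) (k : ℤ) (n : ℕ) : ℝ :=
  if k < 0 then 0
  else Matrix.det (Matrix.of fun i j : Fin k.toNat => fd^[i.val * m] u (n + j.val))

open Matrix Polynomial

section Aux

noncomputable def cornerEquiv (r : ℕ) : (Fin r ⊕ Fin 2) ≃ Fin (r + 2) := by
  apply Equiv.ofBijective
    (Sum.elim (fun i : Fin r => i.succ.castSucc)
      (fun b : Fin 2 => if b = 0 then 0 else Fin.last (r+1)))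
  rw [Fintype.bijective_iff_injective_and_card]
  refine ⟨?_, by simp⟩
  rintro (x | x) (y | y) h <;> have := congrArg Fin.val h
  · simp at this
    exact congrArg Sum.inl (Fin.ext this)
  · exfalso; fin_cases y <;> simp at this <;> omega
  · exfalso; fin_cases x <;> simp at this <;> omega
  · fin_cases x <;> fin_cases y <;> simp at this ⊢

lemma cornerEquiv_inl (r : ℕ) (i : Fin r) : cornerEquiv r (Sum.inl i) = i.succ.castSucc := rfl
lemma cornerEquiv_inr0 (r : ℕ) : cornerEquiv r (Sum.inr 0) = 0 := rfl
lemma cornerEquiv_inr1 (r : ℕ) : cornerEquiv r (Sum.inr 1) = Fin.last (r+1) := rfl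

lemma midRow_ne_zero (r : ℕ) (i : Fin r) : (i.succ.castSucc : Fin (r+2)) ≠ 0 := by
  intro h; have := congrArg Fin.val h; simp at this
lemma midRow_ne_last (r : ℕ) (i : Fin r) : (i.succ.castSucc : Fin (r+2)) ≠ Fin.last (r+1) := by
  intro h; have := congrArg Fin.val h; simp at this; omega
lemma zero_ne_last' (r : ℕ) : (0 : Fin (r+2)) ≠ Fin.last (r+1) := by
  intro h; have := congrArg Fin.val h; simp at this

variable {α : Type*} [CommRing α]

/-- determinant of a matrix whose middle rows are identity rows -/
lemma det_corner₁ (r : ℕ) (P : Matrix (Fin (r+2)) (Fin (r+2)) α)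
    (hmid : ∀ (i : Fin r) (j : Fin (r+2)),
      P i.succ.castSucc j = (1 : Matrix (Fin (r+2)) (Fin (r+2)) α) i.succ.castSucc j) :
    P.det = P 0 0 * P (Fin.last (r+1)) (Fin.last (r+1)) - P 0 (Fin.last (r+1)) * P (Fin.last (r+1)) 0 := by
  rw [← det_submatrix_equiv_self (cornerEquiv r) P]
  have hB : P.submatrix (cornerEquiv r) (cornerEquiv r) =
      fromBlocks 1 0
        (Matrix.of fun b j => P (cornerEquiv r (Sum.inr b)) (cornerEquiv r (Sum.inl j)))
        (Matrix.of fun b b' => P (cornerEquiv r (Sum.inr b)) (cornerEquiv r (Sum.inr b'))) := by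
    ext (i | i) (j | j)
    · simp only [submatrix_apply, fromBlocks_apply₁₁, cornerEquiv_inl]
      rw [hmid]
      simp only [Matrix.one_apply]
      congr 1
      simp [Fin.castSucc_inj, Fin.succ_inj, eq_iff_iff]
    · simp only [submatrix_apply, fromBlocks_apply₁₂, cornerEquiv_inl, Matrix.zero_apply]
      rw [hmid]
      fin_cases j
      · exact Matrix.one_apply_ne (midRow_ne_zero r i)
      · exact Matrix.one_apply_ne (midRow_ne_last r i)
    · simp [fromBlocks_apply₂₁]
    · simp [fromBlocks_apply₂₂]
  rw [hB, det_fromBlocks_zero₁₂, det_one, one_mul, det_fin_two]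
  simp [cornerEquiv_inr0, cornerEquiv_inr1]

/-- determinant of a matrix whose corner rows vanish on middle columns -/
lemma det_corner₂ (r : ℕ) (R : Matrix (Fin (r+2)) (Fin (r+2)) α)
    (h0 : ∀ j : Fin r, R 0 j.succ.castSucc = 0)
    (hl : ∀ j : Fin r, R (Fin.last (r+1)) j.succ.castSucc = 0) :
    R.det = (R.submatrix (fun i : Fin r => i.succ.castSucc) (fun j : Fin r => j.succ.castSucc)).det
      * (R 0 0 * R (Fin.last (r+1)) (Fin.last (r+1)) - R 0 (Fin.last (r+1)) * R (Fin.last (r+1)) 0) := by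
  rw [← det_submatrix_equiv_self (cornerEquiv r) R]
  have hB : R.submatrix (cornerEquiv r) (cornerEquiv r) =
      fromBlocks (R.submatrix (fun i : Fin r => i.succ.castSucc) (fun j : Fin r => j.succ.castSucc))
        (Matrix.of fun i b => R (cornerEquiv r (Sum.inl i)) (cornerEquiv r (Sum.inr b)))
        0
        (Matrix.of fun b b' => R (cornerEquiv r (Sum.inr b)) (cornerEquiv r (Sum.inr b'))) := by
    ext (i | i) (j | j)
    · simp [cornerEquiv_inl]
    · simp [fromBlocks_apply₁₂]
    · simp only [submatrix_apply, fromBlocks_apply₂₁, Matrix.zero_apply, cornerEquiv_inl]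
      fin_cases i
      · exact h0 j
      · exact hl j
    · simp [fromBlocks_apply₂₂]
  rw [hB, det_fromBlocks_zero₂₁, det_fin_two]
  simp [cornerEquiv_inr0, cornerEquiv_inr1]

lemma dodgson_ne_zero {α : Type*} [CommRing α] [IsDomain α] (r : ℕ)
    (M : Matrix (Fin (r+2)) (Fin (r+2)) α) (hM : M.det ≠ 0) :
    M.det * (M.submatrix (fun i : Fin r => i.succ.castSucc) (fun j : Fin r => j.succ.castSucc)).det =
      (M.submatrix Fin.succ Fin.succ).det * (M.submatrix Fin.castSucc Fin.castSucc).det -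
      (M.submatrix Fin.castSucc Fin.succ).det * (M.submatrix Fin.succ Fin.castSucc).det := by
  set l : Fin (r+2) := Fin.last (r+1) with hldef
  set P : Matrix (Fin (r+2)) (Fin (r+2)) α := Matrix.of fun i j =>
    if i = 0 then adjugate M 0 j else if i = l then adjugate M l j
    else (1 : Matrix (Fin (r+2)) (Fin (r+2)) α) i j with hPdef
  have hPM : P * M = Matrix.of fun i j =>
      if i = 0 then (M.det • (1 : Matrix (Fin (r+2)) (Fin (r+2)) α)) i j
      else if i = l then (M.det • (1 : Matrix (Fin (r+2)) (Fin (r+2)) α)) i j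
      else M i j := by
    ext i j
    by_cases h0 : i = 0
    · subst h0
      have : (P * M) 0 j = (adjugate M * M) 0 j := by
        simp only [mul_apply, hPdef, Matrix.of_apply, if_pos rfl, if_true]
      rw [this, adjugate_mul]
      simp
    · by_cases hl : i = l
      · subst hl
        have : (P * M) l j = (adjugate M * M) l j := by
          simp only [mul_apply, hPdef, Matrix.of_apply, if_neg (Ne.symm (zero_ne_last' r)), if_pos rfl, if_true, if_neg h0]
        rw [this, adjugate_mul]
        simp [h0]
      · have : (P * M) i j = ((1 : Matrix (Fin (r+2)) (Fin (r+2)) α) * M) i j := by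
          simp only [mul_apply, hPdef, Matrix.of_apply, if_neg h0, if_neg hl]
        rw [this, Matrix.one_mul]
        simp [h0, hl]
  -- determinant of P
  have hdetP : P.det = adjugate M 0 0 * adjugate M l l - adjugate M 0 l * adjugate M l 0 := by
    rw [det_corner₁ r P (fun i j => by
      simp only [hPdef, Matrix.of_apply, hldef, if_neg (midRow_ne_zero r i), if_neg (midRow_ne_last r i)])]
    simp only [hPdef, Matrix.of_apply, if_pos rfl, if_neg (Ne.symm (zero_ne_last' r)),
      if_neg (zero_ne_last' r), if_true, hldef]
  -- determinant of P * M
  have hdetPM : (P * M).det =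
      (M.submatrix (fun i : Fin r => i.succ.castSucc) (fun j : Fin r => j.succ.castSucc)).det
        * (M.det * M.det) := by
    rw [hPM]
    rw [det_corner₂ r _ (fun j => by
        simp only [Matrix.of_apply, if_pos rfl, if_true, Matrix.smul_apply, Matrix.one_apply_ne (Ne.symm (midRow_ne_zero r j)), smul_zero])
      (fun j => by
        simp only [Matrix.of_apply, hldef, if_neg (Ne.symm (zero_ne_last' r)), if_pos rfl,
          if_true, Matrix.smul_apply, Matrix.one_apply_ne (Ne.symm (midRow_ne_last r j)), smul_zero])]
    congr 1
    · congr 1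
      ext i j
      simp only [submatrix_apply, Matrix.of_apply, hldef, if_neg (midRow_ne_zero r i),
        if_neg (midRow_ne_last r i)]
    · simp [Matrix.one_apply, zero_ne_last' r, Ne.symm (zero_ne_last' r), hldef]
  -- combine
  have key : P.det * M.det =
      (M.submatrix (fun i : Fin r => i.succ.castSucc) (fun j : Fin r => j.succ.castSucc)).det
        * (M.det * M.det) := by
    rw [← det_mul, hdetPM]
  have key2 : P.det = M.det *
      (M.submatrix (fun i : Fin r => i.succ.castSucc) (fun j : Fin r => j.succ.castSucc)).det := by
    apply mul_right_cancel₀ hM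
    rw [key]; ring
  rw [← key2, hdetP]
  have e00 : adjugate M 0 0 = (M.submatrix Fin.succ Fin.succ).det := by
    rw [adjugate_fin_succ_eq_det_submatrix]
    simp [Fin.succAbove_zero]
  have ell : adjugate M l l = (M.submatrix Fin.castSucc Fin.castSucc).det := by
    rw [adjugate_fin_succ_eq_det_submatrix]
    rw [hldef, Fin.succAbove_last]
    have : (-1:α)^((Fin.last (r+1) : ℕ) + (Fin.last (r+1) : ℕ)) = 1 := by
      rw [Fin.val_last]; exact Even.neg_one_pow ⟨r+1, by ring⟩
    rw [this, one_mul]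
  have e0l : adjugate M 0 l = (-1)^(r+1) * (M.submatrix Fin.castSucc Fin.succ).det := by
    rw [adjugate_fin_succ_eq_det_submatrix, hldef, Fin.succAbove_last, Fin.succAbove_zero]
    simp
  have el0 : adjugate M l 0 = (-1)^(r+1) * (M.submatrix Fin.succ Fin.castSucc).det := by
    rw [adjugate_fin_succ_eq_det_submatrix, hldef, Fin.succAbove_last, Fin.succAbove_zero]
    simp
  have hsq : (-1:α)^(r+1) * ((-1:α)^(r+1)) = 1 := by
    rw [← pow_add]; exact Even.neg_one_pow ⟨r+1, by ring⟩
  rw [e00, ell, e0l, el0, mul_mul_mul_comm, hsq, one_mul]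

lemma dodgson (r : ℕ) (A : Matrix (Fin (r+2)) (Fin (r+2)) ℝ) :
    A.det * (A.submatrix (fun i : Fin r => i.succ.castSucc) (fun j : Fin r => j.succ.castSucc)).det =
      (A.submatrix Fin.succ Fin.succ).det * (A.submatrix Fin.castSucc Fin.castSucc).det -
      (A.submatrix Fin.castSucc Fin.succ).det * (A.submatrix Fin.succ Fin.castSucc).det := by
  set M : Matrix (Fin (r+2)) (Fin (r+2)) ℝ[X] := charmatrix (-A) with hMdef
  have hM : M.det ≠ 0 := by
    rw [hMdef]
    exact (Matrix.charpoly_monic (-A)).ne_zero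
  have key := dodgson_ne_zero r M hM
  have hmap : M.map (eval 0) = A := by
    ext i j
    by_cases h : i = j
    · subst h; rw [Matrix.map_apply, hMdef, charmatrix_apply_eq]; simp
    · rw [Matrix.map_apply, hMdef, charmatrix_apply_ne _ _ _ h]; simp
  have := congrArg (Polynomial.evalRingHom (0:ℝ)) key
  simp only [_root_.map_mul, map_sub, RingHom.map_det, RingHom.mapMatrix_apply, coe_evalRingHom,
    ← Matrix.submatrix_map, hmap] at this
  exact this

lemma colops (N : ℕ) (c : Fin (N+1) → ℕ → ℝ) (b : ℕ) :
    Matrix.det (Matrix.of fun i j : Fin (N+1) =>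
      if (j:ℕ) < N then c i (b+j+1) - c i (b+j) else c i (b+N))
    = (-1)^N * Matrix.det (Matrix.of fun i j : Fin (N+1) => c i (b+j)) := by
  set H : Matrix (Fin (N+1)) (Fin (N+1)) ℝ := Matrix.of fun i j => c i (b+j) with hH
  set E : Matrix (Fin (N+1)) (Fin (N+1)) ℝ := Matrix.of fun p j =>
    if (j:ℕ) < N then ((if (p:ℕ) = (j:ℕ)+1 then (1:ℝ) else 0) - (if p = j then 1 else 0))
    else (if p = j then (1:ℝ) else 0) with hE
  have hME : (Matrix.of fun i j : Fin (N+1) =>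
      if (j:ℕ) < N then c i (b+j+1) - c i (b+j) else c i (b+N)) = H * E := by
    ext i j
    rw [Matrix.mul_apply]
    by_cases hj : (j:ℕ) < N
    · simp only [Matrix.of_apply, hE, if_pos hj]
      have h1 : ∀ p : Fin (N+1), (if (p:ℕ) = (j:ℕ)+1 then (1:ℝ) else 0)
          = if p = (⟨(j:ℕ)+1, by omega⟩ : Fin (N+1)) then 1 else 0 := by
        intro p; simp [Fin.ext_iff]
      simp only [h1, mul_sub, Finset.sum_sub_distrib, mul_ite, mul_one, mul_zero,
        Finset.sum_ite_eq', Finset.mem_univ, if_pos]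
      simp only [hH, Matrix.of_apply]
      congr 1
    · simp only [Matrix.of_apply, hE, if_neg hj, mul_ite, mul_one, mul_zero,
        Finset.sum_ite_eq', Finset.mem_univ, if_pos]
      simp only [hH, Matrix.of_apply]
      congr 2
      omega
  have hdetE : E.det = (-1)^N := by
    have htri : E.BlockTriangular OrderDual.toDual := by
      intro p j h
      have hpj : (p:ℕ) < (j:ℕ) := h
      simp only [hE, Matrix.of_apply]
      have h1 : ¬ ((p:ℕ) = (j:ℕ)+1) := by omega
      have h2 : ¬ (p = j) := by intro hc; subst hc; omega
      split_ifs <;> simp_all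
    rw [Matrix.det_of_lowerTriangular E htri]
    have : ∀ p : Fin (N+1), E p p = if (p:ℕ) < N then (-1:ℝ) else 1 := by
      intro p
      simp only [hE, Matrix.of_apply]
      by_cases hp : (p:ℕ) < N
      · rw [if_pos hp, if_pos hp, if_neg (by omega : ¬ ((p:ℕ) = (p:ℕ)+1))]; simp
      · rw [if_neg hp]; simp [hp]
    simp only [this]
    rw [Fin.prod_univ_castSucc]
    rw [if_neg (by simp)]
    have : ∀ p : Fin N, (if ((p.castSucc : Fin (N+1)):ℕ) < N then (-1:ℝ) else 1) = -1 := by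
      intro p; rw [if_pos (by simp [p.isLt])]
    simp only [this, Finset.prod_const, Finset.card_univ, Fintype.card_fin, mul_one]
  rw [hME, Matrix.det_mul, hdetE, mul_comm]

lemma fd_iter_succ_apply (a q : ℕ) (u : ℕ → ℝ) :
    fd^[a+1] u q = fd^[a] u (q+1) - fd^[a] u q := by
  rw [add_comm a 1, Function.iterate_add_apply, Function.iterate_one]
  rfl

lemma Hd_natCast (m : ℕ) (u : ℕ → ℝ) (N n : ℕ) :
    Hd m u (N : ℤ) n = Matrix.det (Matrix.of fun i j : Fin N => fd^[i.val * m] u (n + j.val)) := by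
  rw [Hd, if_neg (not_lt.mpr (Int.natCast_nonneg N))]
  rfl

end Aux

/-- Lemma 3: for `k ≥ 1`, `n ≥ 0`: `H_k(ΔS_n) H_k(Δ^m S_{n+1})
= H_k(Δ^{m+1}S_n) H_k(S_{n+1}) − H_{k+1}(S_n) H_{k−1}(Δ^{m+1}S_{n+1})`. -/
theorem stmt_4 (m : ℕ) (hm : 1 ≤ m) (S : ℕ → ℝ) (k n : ℕ) (hk : 1 ≤ k) :
    Hd m (fd^[1] S) (k : ℤ) n * Hd m (fd^[m] S) (k : ℤ) (n + 1) =
      Hd m (fd^[m + 1] S) (k : ℤ) n * Hd m S (k : ℤ) (n + 1) -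
        Hd m S ((k : ℤ) + 1) n * Hd m (fd^[m + 1] S) ((k : ℤ) - 1) (n + 1) := by
  obtain ⟨r, rfl⟩ : ∃ r, k = r + 1 := ⟨k - 1, by omega⟩
  rw [show ((r+1:ℕ):ℤ) + 1 = ((r+2:ℕ):ℤ) by push_cast; ring,
      show ((r+1:ℕ):ℤ) - 1 = ((r:ℕ):ℤ) by push_cast; ring,
      Hd_natCast, Hd_natCast, Hd_natCast, Hd_natCast, Hd_natCast, Hd_natCast]
  set A : Matrix (Fin (r+2)) (Fin (r+2)) ℝ := Matrix.of fun i j =>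
    if (j:ℕ) < r+1 then fd^[i.val*m+1] S (n+j.val) else fd^[i.val*m] S (n+(r+1)) with hA
  have hdodg := dodgson r A
  -- det A
  have hAdet : A.det = (-1:ℝ)^(r+1) *
      (Matrix.of fun i j : Fin (r+2) => fd^[i.val*m] S (n + j.val)).det := by
    rw [show A = Matrix.of (fun i j : Fin (r+2) =>
        if (j:ℕ) < r+1 then (fun q => fd^[i.val*m] S q) (n+j+1) - (fun q => fd^[i.val*m] S q) (n+j)
        else (fun q => fd^[i.val*m] S q) (n+(r+1))) from ?_,
      colops (r+1) (fun i q => fd^[i.val*m] S q) n]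
    ext i j
    simp only [hA, Matrix.of_apply]
    by_cases hj : (j:ℕ) < r+1
    · rw [if_pos hj, if_pos hj, fd_iter_succ_apply]
    · rw [if_neg hj, if_neg hj]
  -- interior
  have hint : (A.submatrix (fun i : Fin r => i.succ.castSucc) (fun j : Fin r => j.succ.castSucc))
      = Matrix.of (fun i j : Fin r => fd^[i.val*m] (fd^[m+1] S) ((n+1) + j.val)) := by
    ext i j
    simp only [submatrix_apply, Matrix.of_apply, hA, Fin.coe_castSucc, Fin.val_succ]
    rw [if_pos (by omega), show (i.val+1)*m+1 = i.val*m+(m+1) from by ring,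
      Function.iterate_add_apply, show n + (j.val+1) = n+1+j.val from by omega]
  -- succ/castSucc : H_k(Δ^{m+1} S, n)
  have hsc : (A.submatrix Fin.succ Fin.castSucc)
      = Matrix.of (fun i j : Fin (r+1) => fd^[i.val*m] (fd^[m+1] S) (n + j.val)) := by
    ext i j
    simp only [submatrix_apply, Matrix.of_apply, hA, Fin.coe_castSucc, Fin.val_succ]
    rw [if_pos (by omega), show (i.val+1)*m+1 = i.val*m+(m+1) from by ring,
      Function.iterate_add_apply]
  -- castSucc/castSucc : H_k(Δ S, n)
  have hcc : (A.submatrix Fin.castSucc Fin.castSucc)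
      = Matrix.of (fun i j : Fin (r+1) => fd^[i.val*m] (fd^[1] S) (n + j.val)) := by
    ext i j
    simp only [submatrix_apply, Matrix.of_apply, hA, Fin.coe_castSucc]
    rw [if_pos (by omega), ← Function.iterate_add_apply]
  -- succ/succ : (-1)^r * H_k(Δ^m S, n+1)
  have hss : (A.submatrix Fin.succ Fin.succ).det = (-1:ℝ)^r *
      (Matrix.of fun i j : Fin (r+1) => fd^[i.val*m] (fd^[m] S) ((n+1) + j.val)).det := by
    rw [show A.submatrix Fin.succ Fin.succ = Matrix.of (fun i j : Fin (r+1) =>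
        if (j:ℕ) < r then (fun q => fd^[i.val*m] (fd^[m] S) q) ((n+1)+j+1)
          - (fun q => fd^[i.val*m] (fd^[m] S) q) ((n+1)+j)
        else (fun q => fd^[i.val*m] (fd^[m] S) q) ((n+1)+r)) from ?_,
      colops r (fun i q => fd^[i.val*m] (fd^[m] S) q) (n+1)]
    ext i j
    simp only [submatrix_apply, Matrix.of_apply, hA, Fin.val_succ]
    by_cases hj : (j:ℕ) < r
    · rw [if_pos (by omega), if_pos hj]
      simp only [← Function.iterate_add_apply]
      rw [show (i.val+1)*m+1 = (i.val*m+m)+1 from by ring, fd_iter_succ_apply,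
        show n + (j.val+1) + 1 = n+1+j.val+1 from by omega,
        show n + (j.val+1) = n+1+j.val from by omega]
    · rw [if_neg (by omega), if_neg hj]
      simp only [← Function.iterate_add_apply]
      rw [show (i.val+1)*m = i.val*m+m from by ring,
        show n + (r+1) = n+1+r from by omega]
  -- castSucc/succ : (-1)^r * H_k(S, n+1)
  have hcs : (A.submatrix Fin.castSucc Fin.succ).det = (-1:ℝ)^r *
      (Matrix.of fun i j : Fin (r+1) => fd^[i.val*m] S ((n+1) + j.val)).det := by
    rw [show A.submatrix Fin.castSucc Fin.succ = Matrix.of (fun i j : Fin (r+1) =>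
        if (j:ℕ) < r then (fun q => fd^[i.val*m] S q) ((n+1)+j+1)
          - (fun q => fd^[i.val*m] S q) ((n+1)+j)
        else (fun q => fd^[i.val*m] S q) ((n+1)+r)) from ?_,
      colops r (fun i q => fd^[i.val*m] S q) (n+1)]
    ext i j
    simp only [submatrix_apply, Matrix.of_apply, hA, Fin.val_succ, Fin.coe_castSucc]
    by_cases hj : (j:ℕ) < r
    · rw [if_pos (by omega), if_pos hj, fd_iter_succ_apply,
        show n + (j.val+1) + 1 = n+1+j.val+1 from by omega,
        show n + (j.val+1) = n+1+j.val from by omega]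
    · rw [if_neg (by omega), if_neg hj,
        show n + (r+1) = n+1+r from by omega]
  rw [hAdet, hint, hsc, hcc, hss, hcs] at hdodg
  set D1 := (Matrix.of fun i j : Fin (r+1) => fd^[i.val*m] (fd^[m] S) ((n+1) + j.val)).det
  set D2 := (Matrix.of fun i j : Fin (r+1) => fd^[i.val*m] (fd^[1] S) (n + j.val)).det
  set D3 := (Matrix.of fun i j : Fin (r+1) => fd^[i.val*m] S ((n+1) + j.val)).det
  set D4 := (Matrix.of fun i j : Fin (r+1) => fd^[i.val*m] (fd^[m+1] S) (n + j.val)).det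
  set Dbig := (Matrix.of fun i j : Fin (r+2) => fd^[i.val*m] S (n + j.val)).det
  set Dint := (Matrix.of fun i j : Fin r => fd^[i.val*m] (fd^[m+1] S) ((n+1) + j.val)).det
  have hsq : (-1:ℝ)^r * ((-1:ℝ)^r) = 1 := by
    rw [← pow_add]; exact Even.neg_one_pow ⟨r, by ring⟩
  rw [pow_succ] at hdodg
  linear_combination (-(-(1:ℝ))^r) * hdodg + (-(Dbig * Dint + D1 * D2 - D3 * D4)) * hsq
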